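/- Let J ⊆ ℝ be an open interval, x₀ ∈ J, and let M, U : J → Matrix (Fin 2) (Fin 2) ℂ be twice continuously differentiable maps such that det (M x) = 1 for all x ∈ J, U x belongs to SU(2) (i.e. U x is unitary with determinant 1) for all x ∈ J, and trace (M x) = trace (U x) for all x ∈ J. Suppose there is ε ∈ {1, -1} with M x₀ = ε • (1 : Matrix (Fin 2) (Fin 2) ℂ) and that the derivative M' x₀ is nilpotent (equivalently, (M' x₀)² = 0). Then U x₀ = ε • 1 and U' x₀ = 0. -/

import Mathlib

attribute [local instance] Matrix.normedAddCommGroup Matrix.normedSpace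

open Complex

private lemma entryD {f : ℝ → Matrix (Fin 2) (Fin 2) ℂ} {f' : Matrix (Fin 2) (Fin 2) ℂ} {x : ℝ}
    (h : HasDerivAt f f' x) (i j : Fin 2) :
    HasDerivAt (fun t => f t i j) (f' i j) x :=
  hasDerivAt_pi.1 (hasDerivAt_pi.1 h i) j

private lemma constD {J : Set ℝ} (hJo : IsOpen J) {x : ℝ} (hx : x ∈ J)
    {f : ℝ → ℂ} {c d : ℂ} (hf : ∀ y ∈ J, f y = c) (hd : HasDerivAt f d x) : d = 0 :=
  hd.unique ((hasDerivAt_const x c).congr_of_eventuallyEq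
    (Filter.eventuallyEq_of_mem (hJo.mem_nhds hx) hf))

private lemma nilp2 (P : Matrix (Fin 2) (Fin 2) ℂ) (h : P ^ 2 = 0) :
    P 0 0 + P 1 1 = 0 ∧ P 0 0 * P 1 1 - P 0 1 * P 1 0 = 0 := by
  have hdet : P 0 0 * P 1 1 - P 0 1 * P 1 0 = 0 := by
    have h1 : P.det ^ 2 = 0 := by
      rw [← Matrix.det_pow, h, Matrix.det_zero]
    have h2 : P.det = 0 := by
      exact pow_eq_zero_iff (two_ne_zero) |>.1 h1
    rwa [Matrix.det_fin_two] at h2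
  refine ⟨?_, hdet⟩
  rw [pow_two] at h
  have e1 := congrArg (fun A => A 0 0) h
  have e4 := congrArg (fun A => A 1 1) h
  simp [Matrix.mul_apply, Fin.sum_univ_two] at e1 e4
  have ht2 : (P 0 0 + P 1 1) ^ 2 = 0 := by linear_combination e1 + e4 + 2 * hdet
  exact pow_eq_zero_iff two_ne_zero |>.1 ht2

private lemma su2_eq (V : Matrix (Fin 2) (Fin 2) ℂ) (hV : star V * V = 1) (hdet : V.det = 1)
    (ε : ℂ) (hε : ε = 1 ∨ ε = -1) (htr : V.trace = 2 * ε) :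
    V = ε • 1 := by
  have hadj : star V = V.adjugate := by
    have h1 : V * V.adjugate = 1 := by rw [Matrix.mul_adjugate, hdet, one_smul]
    calc star V = star V * (V * V.adjugate) := by rw [h1, mul_one]
    _ = (star V * V) * V.adjugate := by rw [mul_assoc]
    _ = V.adjugate := by rw [hV, one_mul]
  rw [Matrix.adjugate_fin_two] at hadj
  have h00 : star (V 0 0) = V 1 1 := by
    have := congrArg (fun A : Matrix (Fin 2) (Fin 2) ℂ => A 0 0) hadj
    simpa [Matrix.star_apply] using this
  have h01 : star (V 1 0) = -V 0 1 := by
    have := congrArg (fun A : Matrix (Fin 2) (Fin 2) ℂ => A 0 1) hadj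
    simpa [Matrix.star_apply] using this
  rw [Matrix.trace_fin_two] at htr
  rw [Matrix.det_fin_two] at hdet
  have hre : (V 0 0).re = ε.re := by
    have h := congrArg Complex.re htr
    rw [← h00] at h
    simp [Complex.add_re, Complex.conj_re] at h
    rcases hε with h'|h' <;> subst h' <;> simp at h ⊢ <;> linarith
  have hns : Complex.normSq (V 0 0) + Complex.normSq (V 1 0) = 1 := by
    have : V 0 0 * star (V 0 0) + V 1 0 * star (V 1 0) = 1 := by
      rw [h00, h01]; linear_combination hdet
    have := congrArg Complex.re this
    simpa [Complex.mul_conj, Complex.star_def] using this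
  have hre2 : ε.re ^ 2 = 1 := by rcases hε with h'|h' <;> subst h' <;> norm_num
  have hkey : (V 0 0).im * (V 0 0).im + Complex.normSq (V 1 0) = 0 := by
    have h := Complex.normSq_apply (V 0 0)
    rw [hre] at h
    have : ε.re * ε.re = 1 := by nlinarith [hre2]
    nlinarith [hns]
  have him : (V 0 0).im = 0 ∧ Complex.normSq (V 1 0) = 0 := by
    constructor
    · nlinarith [Complex.normSq_nonneg (V 1 0), hkey]
    · nlinarith [mul_self_nonneg ((V 0 0).im), Complex.normSq_nonneg (V 1 0), hkey]
  have hv00 : V 0 0 = ε := by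
    apply Complex.ext
    · exact hre
    · rw [him.1]; rcases hε with h'|h' <;> subst h' <;> simp
  have hv10 : V 1 0 = 0 := Complex.normSq_eq_zero.1 him.2
  have hv01 : V 0 1 = 0 := by
    have := h01; rw [hv10] at this; simpa using this.symm
  have hv11 : V 1 1 = ε := by
    rw [← h00, hv00]; rcases hε with h'|h' <;> subst h' <;> simp
  ext i j
  fin_cases i <;> fin_cases j <;>
    simp [hv00, hv01, hv10, hv11, Matrix.one_apply]

/-- Lemma 2.2: if `M` has determinant one, `U` takes values in `SU(2)`, their traces agree
on an open interval `J`, `M x₀ = ±Id`, and `M' x₀` is nilpotent, then `U x₀ = ±Id` and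
`U' x₀ = 0`. -/
theorem unitrace (a b : ℝ) (J : Set ℝ) (hJ : J = Set.Ioo a b)
    (x₀ : ℝ) (hx₀ : x₀ ∈ J)
    (M U : ℝ → Matrix (Fin 2) (Fin 2) ℂ)
    (hM : ContDiffOn ℝ 2 M J) (hU : ContDiffOn ℝ 2 U J)
    (hdet : ∀ x ∈ J, (M x).det = 1)
    (hUsu : ∀ x ∈ J, U x ∈ Matrix.unitaryGroup (Fin 2) ℂ ∧ (U x).det = 1)
    (htr : ∀ x ∈ J, (M x).trace = (U x).trace)
    (ε : ℂ) (hε : ε = 1 ∨ ε = -1)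
    (hM0 : M x₀ = ε • (1 : Matrix (Fin 2) (Fin 2) ℂ))
    (hnil : (deriv M x₀) ^ 2 = 0) :
    U x₀ = ε • (1 : Matrix (Fin 2) (Fin 2) ℂ) ∧ deriv U x₀ = 0 := by
  have hJo : IsOpen J := hJ ▸ isOpen_Ioo
  have hmem : J ∈ nhds x₀ := hJo.mem_nhds hx₀
  have hεs : star ε = ε := by rcases hε with h|h <;> subst h <;> simp
  have hεne : ε ≠ 0 := by rcases hε with h|h <;> subst h <;> norm_num
  -- Step 1 : U x₀ = ε • 1
  have hU0 : U x₀ = ε • (1 : Matrix (Fin 2) (Fin 2) ℂ) := by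
    apply su2_eq _ (Matrix.mem_unitaryGroup_iff'.1 (hUsu x₀ hx₀).1) (hUsu x₀ hx₀).2 ε hε
    have h := htr x₀ hx₀
    rw [hM0] at h
    rw [← h, Matrix.trace_smul, Matrix.trace_one]
    simp only [Fintype.card_fin, Nat.cast_ofNat, smul_eq_mul]
    ring
  -- first derivatives on J
  have hMd : ∀ x ∈ J, HasDerivAt M (deriv M x) x := fun x hx =>
    ((hM.differentiableOn two_ne_zero).differentiableAt (hJo.mem_nhds hx)).hasDerivAt
  have hUd : ∀ x ∈ J, HasDerivAt U (deriv U x) x := fun x hx =>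
    ((hU.differentiableOn two_ne_zero).differentiableAt (hJo.mem_nhds hx)).hasDerivAt
  have hm : ∀ (i j : Fin 2), ∀ x ∈ J, HasDerivAt (fun t => M t i j) (deriv M x i j) x :=
    fun i j x hx => entryD (hMd x hx) i j
  have hu : ∀ (i j : Fin 2), ∀ x ∈ J, HasDerivAt (fun t => U t i j) (deriv U x i j) x :=
    fun i j x hx => entryD (hUd x hx) i j
  -- second derivatives at x₀
  have hM2 : ContDiffOn ℝ 1 (deriv M) J := hM.deriv_of_isOpen hJo (by norm_num)
  have hU2 : ContDiffOn ℝ 1 (deriv U) J := hU.deriv_of_isOpen hJo (by norm_num)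
  have hMdd : HasDerivAt (deriv M) (deriv (deriv M) x₀) x₀ :=
    ((hM2.differentiableOn one_ne_zero).differentiableAt hmem).hasDerivAt
  have hUdd : HasDerivAt (deriv U) (deriv (deriv U) x₀) x₀ :=
    ((hU2.differentiableOn one_ne_zero).differentiableAt hmem).hasDerivAt
  set Q := deriv (deriv M) x₀ with hQdef
  set R := deriv (deriv U) x₀ with hRdef
  have hdm : ∀ (i j : Fin 2), HasDerivAt (fun x => deriv M x i j) (Q i j) x₀ :=
    fun i j => entryD hMdd i j
  have hdu : ∀ (i j : Fin 2), HasDerivAt (fun x => deriv U x i j) (R i j) x₀ :=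
    fun i j => entryD hUdd i j
  -- values of M at x₀
  have hM00 : M x₀ 0 0 = ε := by rw [hM0]; simp
  have hM11 : M x₀ 1 1 = ε := by rw [hM0]; simp
  have hM01 : M x₀ 0 1 = 0 := by rw [hM0]; simp [Matrix.one_apply]
  have hM10 : M x₀ 1 0 = 0 := by rw [hM0]; simp [Matrix.one_apply]
  have hU00 : U x₀ 0 0 = ε := by rw [hU0]; simp
  have hU11 : U x₀ 1 1 = ε := by rw [hU0]; simp
  have hU01 : U x₀ 0 1 = 0 := by rw [hU0]; simp [Matrix.one_apply]
  have hU10 : U x₀ 1 0 = 0 := by rw [hU0]; simp [Matrix.one_apply]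
  -- nilpotency facts
  obtain ⟨hptr, hpdet⟩ := nilp2 _ hnil
  -- (1) determinant identity : trace of Q vanishes
  have hQtr : Q 0 0 + Q 1 1 = 0 := by
    have hφ : ∀ x ∈ J, (fun x => M x 0 0 * M x 1 1 - M x 0 1 * M x 1 0) x = 1 := by
      intro x hx
      have := hdet x hx
      rwa [Matrix.det_fin_two] at this
    have hg : ∀ x ∈ J,
        HasDerivAt (fun x => M x 0 0 * M x 1 1 - M x 0 1 * M x 1 0)
          (deriv M x 0 0 * M x 1 1 + M x 0 0 * deriv M x 1 1
            - (deriv M x 0 1 * M x 1 0 + M x 0 1 * deriv M x 1 0)) x :=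
      fun x hx => ((hm 0 0 x hx).mul (hm 1 1 x hx)).sub ((hm 0 1 x hx).mul (hm 1 0 x hx))
    have hg0 : ∀ x ∈ J, deriv M x 0 0 * M x 1 1 + M x 0 0 * deriv M x 1 1
        - (deriv M x 0 1 * M x 1 0 + M x 0 1 * deriv M x 1 0) = 0 :=
      fun x hx => constD hJo hx hφ (hg x hx)
    have hG : HasDerivAt (fun x => deriv M x 0 0 * M x 1 1 + M x 0 0 * deriv M x 1 1
        - (deriv M x 0 1 * M x 1 0 + M x 0 1 * deriv M x 1 0))
        ((Q 0 0 * M x₀ 1 1 + deriv M x₀ 0 0 * deriv M x₀ 1 1)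
          + (deriv M x₀ 0 0 * deriv M x₀ 1 1 + M x₀ 0 0 * Q 1 1)
          - ((Q 0 1 * M x₀ 1 0 + deriv M x₀ 0 1 * deriv M x₀ 1 0)
            + (deriv M x₀ 0 1 * deriv M x₀ 1 0 + M x₀ 0 1 * Q 1 0))) x₀ :=
      (((hdm 0 0).mul (hm 1 1 x₀ hx₀)).add ((hm 0 0 x₀ hx₀).mul (hdm 1 1))).sub
        (((hdm 0 1).mul (hm 1 0 x₀ hx₀)).add ((hm 0 1 x₀ hx₀).mul (hdm 1 0)))
    have hG0 := constD hJo hx₀ hg0 hG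
    rw [hM00, hM11, hM01, hM10] at hG0
    have := mul_left_cancel₀ hεne (show ε * (Q 0 0 + Q 1 1) = ε * 0 by
      rw [mul_zero]; linear_combination hG0 - 2 * hpdet)
    exact this
  -- (2) trace identity : trace of R vanishes
  have hRtr : R 0 0 + R 1 1 = 0 := by
    have hφ : ∀ x ∈ J,
        (fun x => M x 0 0 + M x 1 1 - (U x 0 0 + U x 1 1)) x = 0 := by
      intro x hx
      have := htr x hx
      rw [Matrix.trace_fin_two, Matrix.trace_fin_two] at this
      simp [this]
    have hg : ∀ x ∈ J,
        HasDerivAt (fun x => M x 0 0 + M x 1 1 - (U x 0 0 + U x 1 1))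
          (deriv M x 0 0 + deriv M x 1 1 - (deriv U x 0 0 + deriv U x 1 1)) x :=
      fun x hx => ((hm 0 0 x hx).add (hm 1 1 x hx)).sub ((hu 0 0 x hx).add (hu 1 1 x hx))
    have hg0 : ∀ x ∈ J,
        deriv M x 0 0 + deriv M x 1 1 - (deriv U x 0 0 + deriv U x 1 1) = 0 :=
      fun x hx => constD hJo hx hφ (hg x hx)
    have hG : HasDerivAt
        (fun x => deriv M x 0 0 + deriv M x 1 1 - (deriv U x 0 0 + deriv U x 1 1))
        (Q 0 0 + Q 1 1 - (R 0 0 + R 1 1)) x₀ :=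
      ((hdm 0 0).add (hdm 1 1)).sub ((hdu 0 0).add (hdu 1 1))
    have hG0 := constD hJo hx₀ hg0 hG
    linear_combination hQtr - hG0
  -- (3) unitarity identity
  have hφU : ∀ x ∈ J,
      (fun x => star (U x 0 0) * U x 0 0 + star (U x 1 0) * U x 1 0
        + (star (U x 0 1) * U x 0 1 + star (U x 1 1) * U x 1 1)) x = 2 := by
    intro x hx
    have h := Matrix.mem_unitaryGroup_iff'.1 (hUsu x hx).1
    have h00 := congrArg (fun A : Matrix (Fin 2) (Fin 2) ℂ => A 0 0) h
    have h11 := congrArg (fun A : Matrix (Fin 2) (Fin 2) ℂ => A 1 1) h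
    simp [Matrix.mul_apply, Fin.sum_univ_two, Matrix.star_apply, Matrix.one_apply] at h00 h11
    simp only [Complex.star_def]
    linear_combination h00 + h11
  have hgU : ∀ x ∈ J,
      HasDerivAt (fun x => star (U x 0 0) * U x 0 0 + star (U x 1 0) * U x 1 0
          + (star (U x 0 1) * U x 0 1 + star (U x 1 1) * U x 1 1))
        ((star (deriv U x 0 0) * U x 0 0 + star (U x 0 0) * deriv U x 0 0)
          + (star (deriv U x 1 0) * U x 1 0 + star (U x 1 0) * deriv U x 1 0)
          + ((star (deriv U x 0 1) * U x 0 1 + star (U x 0 1) * deriv U x 0 1)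
            + (star (deriv U x 1 1) * U x 1 1 + star (U x 1 1) * deriv U x 1 1))) x :=
    fun x hx =>
      ((((hu 0 0 x hx).star.mul (hu 0 0 x hx)).add
        ((hu 1 0 x hx).star.mul (hu 1 0 x hx))).add
        (((hu 0 1 x hx).star.mul (hu 0 1 x hx)).add
          ((hu 1 1 x hx).star.mul (hu 1 1 x hx))))
  have hgU0 : ∀ x ∈ J,
      (star (deriv U x 0 0) * U x 0 0 + star (U x 0 0) * deriv U x 0 0)
        + (star (deriv U x 1 0) * U x 1 0 + star (U x 1 0) * deriv U x 1 0)
        + ((star (deriv U x 0 1) * U x 0 1 + star (U x 0 1) * deriv U x 0 1)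
          + (star (deriv U x 1 1) * U x 1 1 + star (U x 1 1) * deriv U x 1 1)) = 0 :=
    fun x hx => constD hJo hx hφU (hgU x hx)
  have hGU : HasDerivAt (fun x =>
      (star (deriv U x 0 0) * U x 0 0 + star (U x 0 0) * deriv U x 0 0)
        + (star (deriv U x 1 0) * U x 1 0 + star (U x 1 0) * deriv U x 1 0)
        + ((star (deriv U x 0 1) * U x 0 1 + star (U x 0 1) * deriv U x 0 1)
          + (star (deriv U x 1 1) * U x 1 1 + star (U x 1 1) * deriv U x 1 1)))
      (((star (R 0 0) * U x₀ 0 0 + star (deriv U x₀ 0 0) * deriv U x₀ 0 0)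
          + (star (deriv U x₀ 0 0) * deriv U x₀ 0 0 + star (U x₀ 0 0) * R 0 0))
        + ((star (R 1 0) * U x₀ 1 0 + star (deriv U x₀ 1 0) * deriv U x₀ 1 0)
          + (star (deriv U x₀ 1 0) * deriv U x₀ 1 0 + star (U x₀ 1 0) * R 1 0))
        + (((star (R 0 1) * U x₀ 0 1 + star (deriv U x₀ 0 1) * deriv U x₀ 0 1)
          + (star (deriv U x₀ 0 1) * deriv U x₀ 0 1 + star (U x₀ 0 1) * R 0 1))
          + ((star (R 1 1) * U x₀ 1 1 + star (deriv U x₀ 1 1) * deriv U x₀ 1 1)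
            + (star (deriv U x₀ 1 1) * deriv U x₀ 1 1 + star (U x₀ 1 1) * R 1 1)))) x₀ :=
    (((((hdu 0 0).star.mul (hu 0 0 x₀ hx₀)).add
        (((hu 0 0 x₀ hx₀).star).mul (hdu 0 0))).add
      (((hdu 1 0).star.mul (hu 1 0 x₀ hx₀)).add
        (((hu 1 0 x₀ hx₀).star).mul (hdu 1 0)))).add
      ((((hdu 0 1).star.mul (hu 0 1 x₀ hx₀)).add
        (((hu 0 1 x₀ hx₀).star).mul (hdu 0 1))).add
      (((hdu 1 1).star.mul (hu 1 1 x₀ hx₀)).add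
        (((hu 1 1 x₀ hx₀).star).mul (hdu 1 1)))))
  have hGU0 := constD hJo hx₀ hgU0 hGU
  rw [hU00, hU11, hU01, hU10] at hGU0
  rw [hεs] at hGU0
  simp only [star_zero] at hGU0
  have hRtr' : star (R 0 0) + star (R 1 1) = 0 := by
    have := congrArg star hRtr
    simpa [star_add] using this
  -- sum of norm squares vanishes
  have hsum : star (deriv U x₀ 0 0) * deriv U x₀ 0 0
      + star (deriv U x₀ 1 0) * deriv U x₀ 1 0
      + star (deriv U x₀ 0 1) * deriv U x₀ 0 1
      + star (deriv U x₀ 1 1) * deriv U x₀ 1 1 = 0 := by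
    have h2 : (2 : ℂ) ≠ 0 := two_ne_zero
    apply mul_left_cancel₀ h2
    rw [mul_zero]
    linear_combination hGU0 - ε * hRtr - ε * hRtr'
  have hnsq : Complex.normSq (deriv U x₀ 0 0) + Complex.normSq (deriv U x₀ 1 0)
      + Complex.normSq (deriv U x₀ 0 1) + Complex.normSq (deriv U x₀ 1 1) = 0 := by
    have hc : ((Complex.normSq (deriv U x₀ 0 0) + Complex.normSq (deriv U x₀ 1 0)
        + Complex.normSq (deriv U x₀ 0 1) + Complex.normSq (deriv U x₀ 1 1) : ℝ) : ℂ) = 0 := by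
      push_cast
      rw [← Complex.mul_conj (deriv U x₀ 0 0), ← Complex.mul_conj (deriv U x₀ 1 0),
        ← Complex.mul_conj (deriv U x₀ 0 1), ← Complex.mul_conj (deriv U x₀ 1 1)]
      simp only [Complex.star_def] at hsum
      linear_combination hsum
    exact_mod_cast hc
  have n1 := Complex.normSq_nonneg (deriv U x₀ 0 0)
  have n2 := Complex.normSq_nonneg (deriv U x₀ 1 0)
  have n3 := Complex.normSq_nonneg (deriv U x₀ 0 1)
  have n4 := Complex.normSq_nonneg (deriv U x₀ 1 1)
  have hz00 : deriv U x₀ 0 0 = 0 := Complex.normSq_eq_zero.1 (by linarith)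
  have hz10 : deriv U x₀ 1 0 = 0 := Complex.normSq_eq_zero.1 (by linarith)
  have hz01 : deriv U x₀ 0 1 = 0 := Complex.normSq_eq_zero.1 (by linarith)
  have hz11 : deriv U x₀ 1 1 = 0 := Complex.normSq_eq_zero.1 (by linarith)
  refine ⟨hU0, ?_⟩
  ext i j
  fin_cases i <;> fin_cases j <;>
    simp [hz00, hz10, hz01, hz11]
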